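/- Consider N users, each user n with valuation v_n > 0 and resource occupancy Φ_n > 0, and suppose the accepted set C and the optimal set C* satisfy: (i) for every n ∈ C there is a blocking set Ω̃_n ∋ n such that for all i ∈ Ω̃_n, v_i/Φ_i ≤ v_n/Φ_n and ∑_{i ∈ Ω̃_n} Φ_i ≤ 2; (ii) C* ⊆ ⋃_{n ∈ C} Ω̃_n; and (iii) Φ_n ≥ 1/A + 1/B for all n, where A, B > 0. Then ∑_{n ∈ C} v_n ≥ ((A + B)/(2AB)) · ∑_{i ∈ C*} v_i. -/

import Mathlib

private lemma sum_biUnion_le_aux {α : Type*} [DecidableEq α] (f : α → ℝ)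
    (hf : ∀ i, 0 ≤ f i) (s : Finset α) (t : α → Finset α) :
    ∑ i ∈ s.biUnion t, f i ≤ ∑ n ∈ s, ∑ i ∈ t n, f i := by
  induction s using Finset.induction with
  | empty => simp
  | @insert a s ha ih =>
    rw [Finset.biUnion_insert, Finset.sum_insert ha]
    have h1 : ∑ i ∈ t a ∪ s.biUnion t, f i
        ≤ ∑ i ∈ t a, f i + ∑ i ∈ s.biUnion t, f i := by
      have := Finset.sum_union_inter (s₁ := t a) (s₂ := s.biUnion t) (f := f)
      have h2 : 0 ≤ ∑ i ∈ t a ∩ s.biUnion t, f i :=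
        Finset.sum_nonneg fun i _ => hf i
      linarith
    linarith [ih]

/-- Approximation-ratio bound (Theorem 3 of the paper): if every accepted user `n ∈ C`
has a blocking set `Ω̃ n ∋ n` of users with no larger density whose occupancies sum to
at most 2, the blocking sets cover the optimal set `C*`, and every occupancy is at
least `1/A + 1/B`, then the greedy welfare is at least `(A+B)/(2AB)` times optimal. -/
theorem stmt_2 (N : ℕ) (v Φ : Fin N → ℝ)
    (hv : ∀ n, 0 < v n) (hΦ : ∀ n, 0 < Φ n)
    (C Cstar : Finset (Fin N)) (Ω : Fin N → Finset (Fin N))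
    (A B : ℝ) (hA : 0 < A) (hB : 0 < B)
    (hmem : ∀ n ∈ C, n ∈ Ω n)
    (hdens : ∀ n ∈ C, ∀ i ∈ Ω n, v i / Φ i ≤ v n / Φ n)
    (hload : ∀ n ∈ C, ∑ i ∈ Ω n, Φ i ≤ 2)
    (hcover : Cstar ⊆ C.biUnion Ω)
    (hocc : ∀ n, 1 / A + 1 / B ≤ Φ n) :
    ∑ n ∈ C, v n ≥ (A + B) / (2 * A * B) * ∑ i ∈ Cstar, v i := by
  have hden : (0:ℝ) < 1 / A + 1 / B := by positivity
  -- key bound per accepted user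
  have key : ∀ n ∈ C, ∑ i ∈ Ω n, v i ≤ (2 * A * B) / (A + B) * v n := by
    intro n hn
    have h1 : ∑ i ∈ Ω n, v i ≤ ∑ i ∈ Ω n, v n / Φ n * Φ i := by
      refine Finset.sum_le_sum fun i hi => ?_
      have := hdens n hn i hi
      have hΦi := hΦ i
      calc v i = v i / Φ i * Φ i := by field_simp
        _ ≤ v n / Φ n * Φ i := by
            exact mul_le_mul_of_nonneg_right this hΦi.le
    have h2 : ∑ i ∈ Ω n, v n / Φ n * Φ i = v n / Φ n * ∑ i ∈ Ω n, Φ i := by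
      rw [Finset.mul_sum]
    have h3 : v n / Φ n * ∑ i ∈ Ω n, Φ i ≤ v n / Φ n * 2 := by
      apply mul_le_mul_of_nonneg_left (hload n hn)
      exact div_nonneg (hv n).le (hΦ n).le
    have h4 : v n / Φ n ≤ v n / (1 / A + 1 / B) :=
      div_le_div_of_nonneg_left (hv n).le hden (hocc n)
    have h5 : v n / (1 / A + 1 / B) * 2 = (2 * A * B) / (A + B) * v n := by
      field_simp
      ring
    calc ∑ i ∈ Ω n, v i ≤ v n / Φ n * 2 := by rw [h2] at h1; linarith
      _ ≤ v n / (1 / A + 1 / B) * 2 := by linarith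
      _ = (2 * A * B) / (A + B) * v n := h5
  have hsum : ∑ i ∈ Cstar, v i ≤ ∑ n ∈ C, ∑ i ∈ Ω n, v i := by
    calc ∑ i ∈ Cstar, v i ≤ ∑ i ∈ C.biUnion Ω, v i :=
          Finset.sum_le_sum_of_subset_of_nonneg hcover fun i _ _ => (hv i).le
      _ ≤ ∑ n ∈ C, ∑ i ∈ Ω n, v i := sum_biUnion_le_aux v (fun i => (hv i).le) C Ω
  have hsum2 : ∑ n ∈ C, ∑ i ∈ Ω n, v i ≤ (2 * A * B) / (A + B) * ∑ n ∈ C, v n := by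
    rw [Finset.mul_sum]
    exact Finset.sum_le_sum key
  have hAB : (0:ℝ) < A + B := by linarith
  have h := mul_le_mul_of_nonneg_left (hsum.trans hsum2)
    (show (0:ℝ) ≤ (A + B) / (2 * A * B) by positivity)
  have heq : (A + B) / (2 * A * B) * ((2 * A * B) / (A + B) * ∑ n ∈ C, v n)
      = ∑ n ∈ C, v n := by
    field_simp
  rw [heq] at h
  exact h
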